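/- Let p ∈ (1,∞) and η ∈ (0, 2π). Suppose there exist u : ℝ² → ℝ and f : [−η/2, η/2] → ℝ such that u is continuous on the closure of W_η, three times continuously differentiable on W_η, u(r cos θ, r sin θ) = r² f(θ) for all r > 0 and θ ∈ [−η/2, η/2], u = 0 on ∂W_η, u > 0 on W_η, ∇u ≠ 0 on W_η, and (1/p)·Δu(x) + (1 − 2/p)·|∇u(x)|^{−2}·⟨∇u(x), (D²u(x))·∇u(x)⟩ = −1 for every x ∈ W_η. Then necessarily η < π·(1 − (1/2)·√(2(p−1)/p)). -/

import Mathlib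

open Set Real

/-- The planar wedge of angle `η`. -/
def wedge (η : ℝ) : Set (EuclideanSpace ℝ (Fin 2)) :=
  {x | ∃ r θ : ℝ, 0 < r ∧ -η/2 < θ ∧ θ < η/2 ∧
    x 0 = r * Real.cos θ ∧ x 1 = r * Real.sin θ}

/-- The point with polar coordinates `(r, θ)`. -/
noncomputable def ptOf (r θ : ℝ) : EuclideanSpace ℝ (Fin 2) :=
  (WithLp.equiv 2 (Fin 2 → ℝ)).symm ![r * Real.cos θ, r * Real.sin θ]

/-- The game `p`-Laplacian:
`Δ_p u (x) = (1/p)·Δu(x) + (1 − 2/p)·|∇u(x)|⁻²·⟨∇u(x), D²u(x)·∇u(x)⟩`. -/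
noncomputable def gameLap (p : ℝ) (u : EuclideanSpace ℝ (Fin 2) → ℝ)
    (x : EuclideanSpace ℝ (Fin 2)) : ℝ :=
  (1/p) * (∑ i : Fin 2,
      fderiv ℝ (fun z => gradient u z) x (EuclideanSpace.single i 1) i)
  + (1 - 2/p) * (‖gradient u x‖^2)⁻¹ *
      (inner ℝ (gradient u x) (fderiv ℝ (fun z => gradient u z) x (gradient u x)) : ℝ)


noncomputable section
abbrev E2 := EuclideanSpace ℝ (Fin 2)

def Xv (θ : ℝ) : E2 := Real.cos θ • EuclideanSpace.single 0 1 + Real.sin θ • EuclideanSpace.single 1 1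
def Xp (θ : ℝ) : E2 := (-Real.sin θ) • EuclideanSpace.single 0 1 + Real.cos θ • EuclideanSpace.single (1 : Fin 2) (1:ℝ)

@[simp] lemma Xv_apply0 (θ : ℝ) : Xv θ 0 = Real.cos θ := by
  simp [Xv, EuclideanSpace.single_apply, PiLp.add_apply, PiLp.smul_apply]

@[simp] lemma Xv_apply1 (θ : ℝ) : Xv θ 1 = Real.sin θ := by
  simp [Xv, EuclideanSpace.single_apply, PiLp.add_apply, PiLp.smul_apply]

@[simp] lemma Xp_apply0 (θ : ℝ) : Xp θ 0 = -Real.sin θ := by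
  simp [Xp, EuclideanSpace.single_apply, PiLp.add_apply, PiLp.smul_apply]

@[simp] lemma Xp_apply1 (θ : ℝ) : Xp θ 1 = Real.cos θ := by
  simp [Xp, EuclideanSpace.single_apply, PiLp.add_apply, PiLp.smul_apply]

@[simp] lemma ptOf_apply0 (r θ : ℝ) : ptOf r θ 0 = r * Real.cos θ := by
  simp [ptOf]

@[simp] lemma ptOf_apply1 (r θ : ℝ) : ptOf r θ 1 = r * Real.sin θ := by
  simp [ptOf]

lemma ptOf_eq (r θ : ℝ) : ptOf r θ = r • Xv θ := by
  ext i
  fin_cases i <;> simp [PiLp.smul_apply]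

lemma inner_formula (x y : E2) : (inner ℝ x y : ℝ) = x 0 * y 0 + x 1 * y 1 := by
  simp [PiLp.inner_apply, Fin.sum_univ_two, RCLike.inner_apply, conj_trivial]
  ring

lemma contDiff_Xv : ContDiff ℝ 3 Xv :=
  (Real.contDiff_cos.smul contDiff_const).add (Real.contDiff_sin.smul contDiff_const)

lemma hasDerivAt_Xv (θ : ℝ) : HasDerivAt Xv (Xp θ) θ := by
  have h1 := (Real.hasDerivAt_cos θ).smul_const (EuclideanSpace.single (0:Fin 2) (1:ℝ))
  have h2 := (Real.hasDerivAt_sin θ).smul_const (EuclideanSpace.single (1:Fin 2) (1:ℝ))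
  exact h1.add h2

lemma hasDerivAt_Xp (θ : ℝ) : HasDerivAt Xp (-Xv θ) θ := by
  have h1 := ((Real.hasDerivAt_sin θ).neg).smul_const (EuclideanSpace.single (0:Fin 2) (1:ℝ))
  have h2 := (Real.hasDerivAt_cos θ).smul_const (EuclideanSpace.single (1:Fin 2) (1:ℝ))
  have := h1.add h2
  refine this.congr_deriv ?_
  simp [Xv, Xp]
  module

lemma single_eq_comb (θ : ℝ) :
    (EuclideanSpace.single (0:Fin 2) (1:ℝ)) = Real.cos θ • Xv θ - Real.sin θ • Xp θ ∧
    (EuclideanSpace.single (1:Fin 2) (1:ℝ)) = Real.sin θ • Xv θ + Real.cos θ • Xp θ := by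
  constructor <;> ext i <;> fin_cases i <;>
    simp [PiLp.smul_apply, PiLp.sub_apply, PiLp.add_apply, EuclideanSpace.single_apply] <;>
    nlinarith [Real.sin_sq_add_cos_sq θ]



lemma ptOf_mem_wedge {η r θ : ℝ} (hr : 0 < r) (h1 : -η/2 < θ) (h2 : θ < η/2) :
    ptOf r θ ∈ wedge η := ⟨r, θ, hr, h1, h2, by simp, by simp⟩

/-- the complex coordinate -/
def cc (z : E2) : ℂ := Complex.ofReal (z 0) + Complex.ofReal (z 1) * Complex.I

@[simp] lemma cc_re (z : E2) : (cc z).re = z 0 := by simp [cc]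
@[simp] lemma cc_im (z : E2) : (cc z).im = z 1 := by simp [cc]

lemma continuous_cc : Continuous cc := by
  have h0 : Continuous fun z : E2 => z 0 := (EuclideanSpace.proj (0 : Fin 2) : E2 →L[ℝ] ℝ).continuous
  have h1 : Continuous fun z : E2 => z 1 := (EuclideanSpace.proj (1 : Fin 2) : E2 →L[ℝ] ℝ).continuous
  exact ((Complex.continuous_ofReal.comp h0).add
    ((Complex.continuous_ofReal.comp h1).mul continuous_const))

lemma cc_ptOf {r θ : ℝ} : cc (ptOf r θ) = (r : ℂ) * (Complex.cos θ + Complex.sin θ * Complex.I) := by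
  simp [cc]
  push_cast [Complex.ofReal_cos, Complex.ofReal_sin]
  ring

lemma wedge_eq {η : ℝ} (hη0 : 0 < η) (hη2 : η < 2*Real.pi) :
    wedge η = {z : E2 | cc z ≠ 0 ∧ Complex.arg (cc z) ∈ Ioo (-η/2) (η/2)} := by
  ext z
  constructor
  · rintro ⟨r, θ, hr, h1, h2, hz0, hz1⟩
    have hθΙ : θ ∈ Set.Ioc (-Real.pi) Real.pi := by
      constructor <;> nlinarith [Real.pi_pos]
    have hcz : cc z = (r : ℂ) * (Complex.cos θ + Complex.sin θ * Complex.I) := by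
      have : z = ptOf r θ := by
        ext i; fin_cases i <;> simpa
      rw [this, cc_ptOf]
    have harg : (cc z).arg = θ := by
      rw [hcz]; exact Complex.arg_mul_cos_add_sin_mul_I hr hθΙ
    have hne : cc z ≠ 0 := by
      intro h
      have habs : ‖cc z‖ = r := by
        rw [hcz, norm_mul]
        simp [Complex.norm_cos_add_sin_mul_I, abs_of_pos hr]
      rw [h] at habs; simp at habs
      exact absurd habs.symm (ne_of_gt hr)
    exact ⟨hne, by rw [harg]; exact ⟨h1, h2⟩⟩
  · rintro ⟨hne, h1, h2⟩
    refine ⟨‖cc z‖, (cc z).arg, ?_, h1, h2, ?_, ?_⟩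
    · simpa using hne
    all_goals have habs : ‖cc z‖ ≠ 0 := by simpa using hne
    · rw [← cc_re z, Complex.cos_arg hne, mul_div_cancel₀ _ habs]
    · rw [← cc_im z, Complex.sin_arg (cc z), mul_div_cancel₀ _ habs]

lemma wedge_mem_nhds {η r θ : ℝ} (hη0 : 0 < η) (hη2 : η < 2*Real.pi)
    (hr : 0 < r) (h1 : -η/2 < θ) (h2 : θ < η/2) :
    wedge η ∈ nhds (ptOf r θ) := by
  have hθpi : -Real.pi < θ ∧ θ < Real.pi := by constructor <;> nlinarith [Real.pi_pos]
  have hmem : ptOf r θ ∈ wedge η := ptOf_mem_wedge hr h1 h2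
  rw [wedge_eq hη0 hη2] at hmem ⊢
  obtain ⟨hne, harg⟩ := hmem
  have hslit : cc (ptOf r θ) ∈ Complex.slitPlane := by
    rw [Complex.mem_slitPlane_iff]
    by_cases hs : Real.sin θ = 0
    · left
      have hθ0 : θ = 0 := by
        rwa [Real.sin_eq_zero_iff_of_lt_of_lt hθpi.1 hθpi.2] at hs
      simp [hθ0, hr]
    · right; simpa using mul_ne_zero (ne_of_gt hr) hs
  have hargc : ContinuousAt (fun z : E2 => Complex.arg (cc z)) (ptOf r θ) :=
    (Complex.continuousAt_arg hslit).comp continuous_cc.continuousAt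
  have hA : {z : E2 | Complex.arg (cc z) ∈ Ioo (-η/2) (η/2)} ∈ nhds (ptOf r θ) :=
    hargc.preimage_mem_nhds (Ioo_mem_nhds harg.1 harg.2)
  have hB : {z : E2 | cc z ≠ 0} ∈ nhds (ptOf r θ) :=
    continuous_cc.continuousAt.preimage_mem_nhds (compl_singleton_mem_nhds hne)
  filter_upwards [hA, hB] with z hz1 hz2 using ⟨hz2, hz1⟩


lemma basis_decomp (w : E2) (θ : ℝ) :
    w = (inner ℝ w (Xv θ) : ℝ) • Xv θ + (inner ℝ w (Xp θ) : ℝ) • Xp θ := by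
  ext i
  fin_cases i
  · simp [inner_formula, PiLp.add_apply, PiLp.smul_apply]
    linear_combination (-(w 0)) * Real.sin_sq_add_cos_sq θ
  · simp [inner_formula, PiLp.add_apply, PiLp.smul_apply]
    linear_combination (-(w 1)) * Real.sin_sq_add_cos_sq θ

lemma inner_gradient (u : E2 → ℝ) (x v : E2) :
    (inner ℝ (gradient u x) v : ℝ) = fderiv ℝ u x v :=
  InnerProductSpace.toDual_symm_apply

section main
variable {η : ℝ} {u : E2 → ℝ} {F : ℝ → ℝ}
variable (hη0 : 0 < η) (hη2 : η < 2*Real.pi)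
variable (husmooth : ContDiffOn ℝ 3 u (wedge η))
variable (hval : ∀ r θ : ℝ, 0 < r → -η/2 < θ → θ < η/2 → u (ptOf r θ) = r^2 * F θ)

/-- the polar map -/
def Phi : ℝ × ℝ → E2 := fun q => q.1 • Xv q.2

lemma hasFDerivAt_Phi (r θ : ℝ) :
    HasFDerivAt Phi ((r : ℝ) • (((1 : ℝ →L[ℝ] ℝ).smulRight (Xp θ)).comp
      (ContinuousLinearMap.snd ℝ ℝ ℝ)) + (ContinuousLinearMap.fst ℝ ℝ ℝ).smulRight (Xv θ))
      (r, θ) := by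
  have hfst : HasFDerivAt (fun q : ℝ × ℝ => q.1) (ContinuousLinearMap.fst ℝ ℝ ℝ) (r, θ) :=
    hasFDerivAt_fst
  have hXv2 : HasFDerivAt (fun q : ℝ × ℝ => Xv q.2)
      (((1 : ℝ →L[ℝ] ℝ).smulRight (Xp θ)).comp (ContinuousLinearMap.snd ℝ ℝ ℝ)) (r, θ) :=
    by have := ((hasDerivAt_Xv θ).hasFDerivAt).comp (r, θ) (hasFDerivAt_snd (𝕜 := ℝ) (p := (r, θ))); exact this
  exact hfst.smul hXv2

include hη0 hη2 husmooth hval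

lemma hF_smooth : ∀ θ : ℝ, -η/2 < θ → θ < η/2 → ContDiffAt ℝ 3 F θ := by
  intro θ h1 h2
  have hmem := wedge_mem_nhds hη0 hη2 one_pos h1 h2
  have hXveq : Xv θ = ptOf 1 θ := by
    ext i; fin_cases i <;> simp
  have hu : ContDiffAt ℝ 3 u (Xv θ) := by
    rw [hXveq]; exact husmooth.contDiffAt hmem
  have h1' : ContDiffAt ℝ 3 (u ∘ Xv) θ := hu.comp θ contDiff_Xv.contDiffAt
  apply h1'.congr_of_eventuallyEq
  have hIoo : Set.Ioo (-η/2) (η/2) ∈ nhds θ := Ioo_mem_nhds h1 h2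
  filter_upwards [hIoo] with t ht
  have : u (ptOf 1 t) = 1^2 * F t := hval 1 t one_pos ht.1 ht.2
  have hXveqt : Xv t = ptOf 1 t := by ext i; fin_cases i <;> simp
  simp only [Function.comp_apply, hXveqt, this, one_pow, one_mul]

lemma grad_at (r θ : ℝ) (hr : 0 < r) (h1 : -η/2 < θ) (h2 : θ < η/2) :
    gradient u (ptOf r θ) = (2*r*F θ) • Xv θ + (r * deriv F θ) • Xp θ := by
  have hmem := wedge_mem_nhds hη0 hη2 hr h1 h2
  have hud : DifferentiableAt ℝ u (ptOf r θ) :=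
    (husmooth.contDiffAt hmem).differentiableAt (by norm_num)
  have hΦx : Phi (r, θ) = ptOf r θ := (ptOf_eq r θ).symm
  have hΦ := hasFDerivAt_Phi r θ
  have hg' : HasFDerivAt u (fderiv ℝ u (ptOf r θ)) (Phi (r, θ)) := by
    rw [hΦx]; exact hud.hasFDerivAt
  have hcomp : HasFDerivAt (u ∘ Phi) ((fderiv ℝ u (ptOf r θ)).comp
      ((r : ℝ) • (((1 : ℝ →L[ℝ] ℝ).smulRight (Xp θ)).comp (ContinuousLinearMap.snd ℝ ℝ ℝ))
        + (ContinuousLinearMap.fst ℝ ℝ ℝ).smulRight (Xv θ))) (r, θ) :=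
    hg'.comp (r, θ) hΦ
  -- explicit function
  have hFd : HasDerivAt F (deriv F θ) θ :=
    ((hF_smooth hη0 hη2 husmooth hval θ h1 h2).differentiableAt (by norm_num)).hasDerivAt
  have hsq : HasFDerivAt (fun q : ℝ × ℝ => q.1^2)
      (((1 : ℝ →L[ℝ] ℝ).smulRight (2*r^1)).comp (ContinuousLinearMap.fst ℝ ℝ ℝ)) (r, θ) :=
    by have := ((hasDerivAt_pow 2 r).hasFDerivAt).comp (r, θ) (hasFDerivAt_fst (𝕜 := ℝ) (p := (r, θ))); exact this
  have hF2 : HasFDerivAt (fun q : ℝ × ℝ => F q.2)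
      (((1 : ℝ →L[ℝ] ℝ).smulRight (deriv F θ)).comp (ContinuousLinearMap.snd ℝ ℝ ℝ)) (r, θ) :=
    (hFd.hasFDerivAt).comp (r, θ) hasFDerivAt_snd
  have hψ := hsq.mul hF2
  have heq : (fun q : ℝ × ℝ => q.1^2 * F q.2) =ᶠ[nhds (r, θ)] (u ∘ Phi) := by
    have hopen : IsOpen {q : ℝ × ℝ | 0 < q.1 ∧ q.2 ∈ Set.Ioo (-η/2) (η/2)} :=
      (isOpen_Ioi.preimage continuous_fst).inter (isOpen_Ioo.preimage continuous_snd)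
    filter_upwards [hopen.mem_nhds ⟨hr, h1, h2⟩] with q hq
    have := hval q.1 q.2 hq.1 hq.2.1 hq.2.2
    simp only [Function.comp_apply, Phi, ← ptOf_eq, this]
  have huψ := (Filter.EventuallyEq.hasFDerivAt_iff heq).1 hψ
  have hunique := hcomp.unique huψ
  have hXv : fderiv ℝ u (ptOf r θ) (Xv θ) = 2*r*F θ := by
    have h10 := congrFun (congrArg DFunLike.coe hunique) (1, 0)
    simp at h10
    rw [h10]; ring
  have hXp : fderiv ℝ u (ptOf r θ) (Xp θ) = r * deriv F θ := by
    have h01 := congrFun (congrArg DFunLike.coe hunique) (0, 1)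
    simp at h01
    have h01' : r * ((fderiv ℝ u (ptOf r θ)) (Xp θ)) = r * (r * deriv F θ) := by
      rw [h01]; ring
    exact mul_left_cancel₀ hr.ne' h01' 
  calc gradient u (ptOf r θ)
      = (inner ℝ (gradient u (ptOf r θ)) (Xv θ) : ℝ) • Xv θ
        + (inner ℝ (gradient u (ptOf r θ)) (Xp θ) : ℝ) • Xp θ := basis_decomp _ θ
    _ = (2*r*F θ) • Xv θ + (r * deriv F θ) • Xp θ := by
        rw [inner_gradient, inner_gradient, hXv, hXp]


lemma hF_contDiffOn : ContDiffOn ℝ 3 F (Set.Ioo (-η/2) (η/2)) := fun θ hθ =>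
  (hF_smooth hη0 hη2 husmooth hval θ hθ.1 hθ.2).contDiffWithinAt

lemma hF_deriv_hasDerivAt (θ : ℝ) (h1 : -η/2 < θ) (h2 : θ < η/2) :
    HasDerivAt (deriv F) (deriv (deriv F) θ) θ := by
  have h := (hF_contDiffOn hη0 hη2 husmooth hval).deriv_of_isOpen isOpen_Ioo
    (by norm_num : (1:WithTop ℕ∞) + 1 ≤ 3)
  have := (h.differentiableOn (by norm_num)).differentiableAt
    (isOpen_Ioo.mem_nhds ⟨h1, h2⟩)
  exact this.hasDerivAt

lemma hess_at (θ : ℝ) (h1 : -η/2 < θ) (h2 : θ < η/2) :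
    fderiv ℝ (fun z => gradient u z) (ptOf 1 θ) (Xv θ) = (2*F θ) • Xv θ + (deriv F θ) • Xp θ ∧
    fderiv ℝ (fun z => gradient u z) (ptOf 1 θ) (Xp θ)
      = (deriv F θ) • Xv θ + (2*F θ + deriv (deriv F) θ) • Xp θ := by
  have hmem := wedge_mem_nhds hη0 hη2 one_pos h1 h2
  have hu3 : ContDiffAt ℝ 3 u (ptOf 1 θ) := husmooth.contDiffAt hmem
  have hfd : ContDiffAt ℝ 2 (fderiv ℝ u) (ptOf 1 θ) := hu3.fderiv_right (by norm_num)
  have hGd : DifferentiableAt ℝ (fun z => gradient u z) (ptOf 1 θ) := by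
    have hT : Differentiable ℝ
        (fun w : (EuclideanSpace ℝ (Fin 2)) →L[ℝ] ℝ => (InnerProductSpace.toDual ℝ E2).symm w) :=
      (InnerProductSpace.toDual ℝ E2).symm.differentiable
    exact DifferentiableAt.comp (ptOf 1 θ) (hT.differentiableAt)
      (hfd.differentiableAt (by norm_num))
  have hB : HasFDerivAt (fun z => gradient u z)
      (fderiv ℝ (fun z => gradient u z) (ptOf 1 θ)) (ptOf 1 θ) := hGd.hasFDerivAt
  have hΦx : Phi (1, θ) = ptOf 1 θ := (ptOf_eq 1 θ).symm
  have hΦ := hasFDerivAt_Phi 1 θ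
  have hB' : HasFDerivAt (fun z => gradient u z)
      (fderiv ℝ (fun z => gradient u z) (ptOf 1 θ)) (Phi (1, θ)) := by rw [hΦx]; exact hB
  have hGcomp := hB'.comp (1, θ) hΦ
  -- explicit side
  have hFd : HasDerivAt F (deriv F θ) θ :=
    ((hF_smooth hη0 hη2 husmooth hval θ h1 h2).differentiableAt (by norm_num)).hasDerivAt
  have hFd' := hF_deriv_hasDerivAt hη0 hη2 husmooth hval θ h1 h2
  have hF2 : HasFDerivAt (fun q : ℝ × ℝ => F q.2)
      (((1 : ℝ →L[ℝ] ℝ).smulRight (deriv F θ)).comp (ContinuousLinearMap.snd ℝ ℝ ℝ)) (1, θ) :=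
    (hFd.hasFDerivAt).comp (1, θ) hasFDerivAt_snd
  have hF'2 : HasFDerivAt (fun q : ℝ × ℝ => deriv F q.2)
      (((1 : ℝ →L[ℝ] ℝ).smulRight (deriv (deriv F) θ)).comp (ContinuousLinearMap.snd ℝ ℝ ℝ))
      (1, θ) := by have := (hFd'.hasFDerivAt).comp ((1:ℝ), θ) (hasFDerivAt_snd (𝕜 := ℝ) (p := ((1:ℝ), θ))); exact this
  have hXv2 : HasFDerivAt (fun q : ℝ × ℝ => Xv q.2)
      (((1 : ℝ →L[ℝ] ℝ).smulRight (Xp θ)).comp (ContinuousLinearMap.snd ℝ ℝ ℝ)) (1, θ) :=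
    by have := ((hasDerivAt_Xv θ).hasFDerivAt).comp ((1:ℝ), θ) (hasFDerivAt_snd (𝕜 := ℝ) (p := ((1:ℝ), θ))); exact this
  have hXp2 : HasFDerivAt (fun q : ℝ × ℝ => Xp q.2)
      (((1 : ℝ →L[ℝ] ℝ).smulRight (-Xv θ)).comp (ContinuousLinearMap.snd ℝ ℝ ℝ)) (1, θ) :=
    by have := ((hasDerivAt_Xp θ).hasFDerivAt).comp ((1:ℝ), θ) (hasFDerivAt_snd (𝕜 := ℝ) (p := ((1:ℝ), θ))); exact this
  have hc1 : HasFDerivAt (fun q : ℝ × ℝ => 2*q.1*F q.2) _ (1, θ) :=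
    ((hasFDerivAt_fst.const_mul (2:ℝ)).mul hF2)
  have hs1 := hc1.smul hXv2
  have hc2 : HasFDerivAt (fun q : ℝ × ℝ => q.1 * deriv F q.2) _ (1, θ) :=
    (hasFDerivAt_fst.mul hF'2)
  have hs2 := hc2.smul hXp2
  have hV := hs1.add hs2
  have heq : (fun q : ℝ × ℝ => (2*q.1*F q.2) • Xv q.2 + (q.1 * deriv F q.2) • Xp q.2)
      =ᶠ[nhds (1, θ)] (fun z => gradient u z) ∘ Phi := by
    have hopen : IsOpen {q : ℝ × ℝ | 0 < q.1 ∧ q.2 ∈ Set.Ioo (-η/2) (η/2)} :=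
      (isOpen_Ioi.preimage continuous_fst).inter (isOpen_Ioo.preimage continuous_snd)
    filter_upwards [hopen.mem_nhds ⟨one_pos, h1, h2⟩] with q hq
    have := grad_at hη0 hη2 husmooth hval q.1 q.2 hq.1 hq.2.1 hq.2.2
    simp only [Function.comp_apply, Phi, ← ptOf_eq, this]
  have huV := (Filter.EventuallyEq.hasFDerivAt_iff heq).1 hV
  have hunique := hGcomp.unique huV
  constructor
  · have h10 := congrFun (congrArg DFunLike.coe hunique.symm) ((1:ℝ), (0:ℝ))
    simp at h10
    rw [h10.symm]
    module
  · have h01 := congrFun (congrArg DFunLike.coe hunique.symm) ((0:ℝ), (1:ℝ))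
    simp at h01
    rw [h01.symm]
    module


lemma sum_trace (θ : ℝ) (h1 : -η/2 < θ) (h2 : θ < η/2) :
    ∑ i : Fin 2, fderiv ℝ (fun z => gradient u z) (ptOf 1 θ) (EuclideanSpace.single i 1) i
      = 4 * F θ + deriv (deriv F) θ := by
  obtain ⟨hBx, hBp⟩ := hess_at hη0 hη2 husmooth hval θ h1 h2
  obtain ⟨hs0, hs1⟩ := single_eq_comb θ
  rw [Fin.sum_univ_two, hs0, hs1, map_sub, map_smul, map_smul, map_add, map_smul, map_smul,
    hBx, hBp]
  simp only [PiLp.add_apply, PiLp.sub_apply, PiLp.smul_apply, smul_eq_mul,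
    Xv_apply0, Xv_apply1, Xp_apply0, Xp_apply1]
  linear_combination (4*F θ + deriv (deriv F) θ) * Real.sin_sq_add_cos_sq θ

lemma norm_grad_sq (θ : ℝ) (h1 : -η/2 < θ) (h2 : θ < η/2) :
    ‖gradient u (ptOf 1 θ)‖^2 = 4*(F θ)^2 + (deriv F θ)^2 := by
  rw [← real_inner_self_eq_norm_sq, grad_at hη0 hη2 husmooth hval 1 θ one_pos h1 h2]
  simp only [inner_formula, PiLp.add_apply, PiLp.smul_apply, smul_eq_mul,
    Xv_apply0, Xv_apply1, Xp_apply0, Xp_apply1]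
  linear_combination (4*(F θ)^2 + (deriv F θ)^2) * Real.sin_sq_add_cos_sq θ

lemma inner_hess (θ : ℝ) (h1 : -η/2 < θ) (h2 : θ < η/2) :
    (inner ℝ (gradient u (ptOf 1 θ))
      (fderiv ℝ (fun z => gradient u z) (ptOf 1 θ) (gradient u (ptOf 1 θ))) : ℝ)
      = 8*(F θ)^3 + 6*F θ*(deriv F θ)^2 + (deriv F θ)^2 * deriv (deriv F) θ := by
  obtain ⟨hBx, hBp⟩ := hess_at hη0 hη2 husmooth hval θ h1 h2
  have hg := grad_at hη0 hη2 husmooth hval 1 θ one_pos h1 h2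
  rw [hg, map_add, map_smul, map_smul, hBx, hBp]
  simp only [inner_formula, PiLp.add_apply, PiLp.smul_apply, smul_eq_mul,
    Xv_apply0, Xv_apply1, Xp_apply0, Xp_apply1]
  linear_combination (8*(F θ)^3 + 6*F θ*(deriv F θ)^2 + (deriv F θ)^2 * deriv (deriv F) θ) *
    Real.sin_sq_add_cos_sq θ

lemma ode_scalar (p : ℝ) (θ : ℝ) (h1 : -η/2 < θ) (h2 : θ < η/2)
    (hpde : gameLap p u (ptOf 1 θ) = -1) :
    (1/p) * (4*F θ + deriv (deriv F) θ) + (1-2/p) * (4*(F θ)^2 + (deriv F θ)^2)⁻¹ *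
      (8*(F θ)^3 + 6*F θ*(deriv F θ)^2 + (deriv F θ)^2 * deriv (deriv F) θ) = -1 := by
  unfold gameLap at hpde
  rw [sum_trace hη0 hη2 husmooth hval θ h1 h2, norm_grad_sq hη0 hη2 husmooth hval θ h1 h2,
    inner_hess hη0 hη2 husmooth hval θ h1 h2] at hpde
  exact hpde

end main

section partB

/-- the comparison function -/
def Hfun (a w : ℝ) : ℝ := Real.arctan (w/2) - (1/a) * Real.arctan (w/a)

lemma hasDerivAt_Hfun (a : ℝ) (ha : 0 < a) (w : ℝ) :
    HasDerivAt (Hfun a) (2/(4+w^2) - 1/(a^2+w^2)) w := by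
  have h1 : HasDerivAt (fun w : ℝ => Real.arctan (w/2)) ((1/(1+(w/2)^2)) * (1/2)) w := by
    have := (Real.hasDerivAt_arctan (w/2)).comp w ((hasDerivAt_id w).div_const 2)
    simpa [Function.comp_def] using this
  have h2 : HasDerivAt (fun w : ℝ => (1/a) * Real.arctan (w/a))
      ((1/a) * ((1/(1+(w/a)^2)) * (1/a))) w := by
    have := ((Real.hasDerivAt_arctan (w/a)).comp w ((hasDerivAt_id w).div_const a)).const_mul (1/a)
    simpa using this
  have h := h1.sub h2
  refine h.congr_deriv ?_
  have ha' : a ≠ 0 := ha.ne'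
  have h4 : (4:ℝ) + w^2 > 0 := by positivity
  have h5 : a^2 + w^2 > 0 := by positivity
  have h6 : 1 + (w/2)^2 > 0 := by positivity
  have h7 : 1 + (w/a)^2 > 0 := by positivity
  field_simp
  ring

lemma Hfun_upper (a : ℝ) (ha0 : 0 < a) (ha2 : 2 < a^2) (w : ℝ) :
    Hfun a w < Real.pi/2 - (1/a) * (Real.pi/2) := by
  set h : ℝ → ℝ := fun w => Real.pi/2 - a⁻¹ * (Real.pi/2) - Hfun a w with hh
  have hderiv : ∀ x : ℝ, HasDerivAt h ((a^2+x^2)⁻¹ - 2/(4+x^2)) x := fun x => by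
    simpa using (hasDerivAt_const x (Real.pi/2 - (1/a) * (Real.pi/2))).fun_sub
      (hasDerivAt_Hfun a ha0 x)
  have hanti : StrictAnti h := by
    apply strictAnti_of_deriv_neg
    intro x
    rw [(hderiv x).deriv]
    have h4 : (0:ℝ) < 4 + x^2 := by positivity
    have h5 : (0:ℝ) < a^2 + x^2 := by positivity
    have hlt : 1/(a^2+x^2) < 2/(4+x^2) := by
      rw [div_lt_div_iff₀ h5 h4]
      nlinarith
    rw [one_div] at hlt
    linarith
  have htendH : Filter.Tendsto (Hfun a) Filter.atTop
      (nhds (Real.pi/2 - (1/a) * (Real.pi/2))) := by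
    have t1 : Filter.Tendsto (fun w : ℝ => Real.arctan (w/2)) Filter.atTop (nhds (Real.pi/2)) :=
      (Real.tendsto_arctan_atTop.mono_right nhdsWithin_le_nhds).comp
        (Filter.tendsto_id.atTop_div_const two_pos)
    have t2 : Filter.Tendsto (fun w : ℝ => (1/a) * Real.arctan (w/a)) Filter.atTop
        (nhds ((1/a) * (Real.pi/2))) :=
      ((Real.tendsto_arctan_atTop.mono_right nhdsWithin_le_nhds).comp
        (Filter.tendsto_id.atTop_div_const ha0)).const_mul (1/a)
    exact t1.sub t2
  have htend : Filter.Tendsto h Filter.atTop (nhds 0) := by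
    have h0 := (tendsto_const_nhds (x := (Real.pi/2 - (1/a) * (Real.pi/2)))
      (f := Filter.atTop (α := ℝ))).sub htendH
    simpa using h0
  have h1 : h (w+1) ≥ 0 := by
    apply le_of_tendsto htend
    filter_upwards [Filter.eventually_ge_atTop (w+1)] with z hz
    exact hanti.antitone hz
  have h2 : h w > h (w+1) := hanti (by linarith)
  have h3 : h w > 0 := lt_of_le_of_lt h1 h2
  simp only [hh] at h3
  rw [one_div]
  linarith

lemma Hfun_lower (a : ℝ) (ha0 : 0 < a) (ha2 : 2 < a^2) (w : ℝ) :
    -(Real.pi/2 - (1/a) * (Real.pi/2)) < Hfun a w := by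
  have := Hfun_upper a ha0 ha2 (-w)
  have hodd : Hfun a (-w) = -Hfun a w := by
    simp only [Hfun, neg_div, Real.arctan_neg]
    ring
  rw [hodd] at this
  linarith

lemma algebra_key (p c c1 c2 : ℝ) (hp : 1 < p) (hc : 0 < c)
    (hode : (1/p) * (4*c + c2) + (1-2/p) * (4*c^2+c1^2)⁻¹ *
      (8*c^3+6*c*c1^2+c1^2*c2) = -1) :
    1 + (2/(4+(c1/c)^2) - 1/(2*p/(p-1)+(c1/c)^2)) * ((c2*c - c1^2)/c^2) < 0 := by
  have hp0 : (0:ℝ) < p := by linarith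
  have hp1 : (0:ℝ) < p - 1 := by linarith
  have hS : (0:ℝ) < 4*c^2+c1^2 := by positivity
  have hA : (2*p/(p-1)) * (p-1) = 2*p := by field_simp
  have hApos : (0:ℝ) < 2*p/(p-1) := by positivity
  have hT : (0:ℝ) < (2*p/(p-1))*c^2+c1^2 := by positivity
  have hD : (0:ℝ) < 4*c^2+(p-1)*c1^2 := by positivity
  have hc2 : c2 * (4*c^2+(p-1)*c1^2)
      = -(p*(4*c^2+c1^2)) - 8*p*c^3 - (6*p-8)*c*c1^2 := by
    field_simp at hode
    refine mul_left_cancel₀ hp0.ne' ?_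
    linear_combination p * hode
  have hX : (0:ℝ) < 4+(c1/c)^2 := by positivity
  have hY : (0:ℝ) < 2*p/(p-1)+(c1/c)^2 := by positivity
  have e1 : 1 + (2/(4+(c1/c)^2) - 1/(2*p/(p-1)+(c1/c)^2)) * ((c2*c - c1^2)/c^2)
      = ((4*c^2+c1^2)*((2*p/(p-1))*c^2+c1^2)
          + (2*((2*p/(p-1))*c^2+c1^2) - (4*c^2+c1^2))*(c2*c - c1^2))
        / ((4*c^2+c1^2)*((2*p/(p-1))*c^2+c1^2)) := by
    field_simp
  have e2 : (p-1) * ((4*c^2+c1^2)*((2*p/(p-1))*c^2+c1^2)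
      + (2*((2*p/(p-1))*c^2+c1^2) - (4*c^2+c1^2))*(c2*c - c1^2)) = -(p*c*(4*c^2+c1^2)) := by
    linear_combination c * hc2 + ((4*c^2+c1^2)*c^2 + 2*c^3*c2 - 2*c^2*c1^2) * hA
  rw [e1]
  apply div_neg_of_neg_of_pos
  · have hpos : 0 < p*c*(4*c^2+c1^2) := by positivity
    nlinarith [e2, hpos, hp1]
  · positivity

end partB


end

theorem necessity_of_angle_condition
    (p η : ℝ) (hp : 1 < p) (hη : η ∈ Set.Ioo 0 (2*Real.pi))
    (u : EuclideanSpace ℝ (Fin 2) → ℝ) (f : ℝ → ℝ)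
    (hucont : ContinuousOn u (closure (wedge η)))
    (husmooth : ContDiffOn ℝ 3 u (wedge η))
    (huf : ∀ r θ : ℝ, 0 < r → θ ∈ Set.Icc (-η/2) (η/2) → u (ptOf r θ) = r^2 * f θ)
    (hub : ∀ x ∈ frontier (wedge η), u x = 0)
    (hupos : ∀ x ∈ wedge η, 0 < u x)
    (hugrad : ∀ x ∈ wedge η, gradient u x ≠ 0)
    (hupde : ∀ x ∈ wedge η, gameLap p u x = -1) :
    η < Real.pi * (1 - (1/2) * Real.sqrt (2*(p-1)/p)) := by
  obtain ⟨hη0, hη2⟩ := hη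
  set F : ℝ → ℝ := fun θ => u (ptOf 1 θ) with hF
  have hval : ∀ r θ : ℝ, 0 < r → -η/2 < θ → θ < η/2 → u (ptOf r θ) = r^2 * F θ := by
    intro r θ hr h1 h2
    have hIcc : θ ∈ Set.Icc (-η/2) (η/2) := ⟨le_of_lt h1, le_of_lt h2⟩
    have e1 := huf r θ hr hIcc
    have e2 := huf 1 θ one_pos hIcc
    simp only [one_pow, one_mul] at e2
    rw [e1, hF]
    simp only [e2]
  have hFpos : ∀ θ : ℝ, -η/2 < θ → θ < η/2 → 0 < F θ := fun θ h1 h2 =>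
    hupos _ (ptOf_mem_wedge one_pos h1 h2)
  have hp1 : (0:ℝ) < p - 1 := by linarith
  have hp0 : (0:ℝ) < p := by linarith
  set a := Real.sqrt (2*p/(p-1)) with ha
  have hA : a^2 = 2*p/(p-1) := Real.sq_sqrt (by positivity)
  have ha0 : 0 < a := Real.sqrt_pos.2 (by positivity)
  have ha2 : 2 < a^2 := by
    rw [hA, lt_div_iff₀ hp1]; nlinarith
  set v : ℝ → ℝ := fun θ => deriv F θ / F θ with hv
  set φ : ℝ → ℝ := fun θ => θ + Hfun a (v θ) with hφ
  have hφderiv : ∀ θ : ℝ, -η/2 < θ → θ < η/2 →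
      HasDerivAt φ (deriv φ θ) θ ∧ deriv φ θ < 0 := by
    intro θ h1 h2
    have hc := hFpos θ h1 h2
    have hFd : HasDerivAt F (deriv F θ) θ :=
      ((hF_smooth hη0 hη2 husmooth hval θ h1 h2).differentiableAt (by norm_num)).hasDerivAt
    have hFd' := hF_deriv_hasDerivAt hη0 hη2 husmooth hval θ h1 h2
    have hvd : HasDerivAt v ((deriv (deriv F) θ * F θ - (deriv F θ)^2)/(F θ)^2) θ := by
      have h := hFd'.div hFd hc.ne'
      refine h.congr_deriv ?_
      ring
    have hHd := hasDerivAt_Hfun a ha0 (v θ)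
    have hfin : HasDerivAt φ (1 + (2/(4+(v θ)^2) - 1/(a^2+(v θ)^2)) *
        ((deriv (deriv F) θ * F θ - (deriv F θ)^2)/(F θ)^2)) θ :=
      (hasDerivAt_id θ).add (hHd.comp θ hvd)
    have hode := ode_scalar hη0 hη2 husmooth hval p θ h1 h2
      (hupde _ (ptOf_mem_wedge one_pos h1 h2))
    have hkey := algebra_key p (F θ) (deriv F θ) (deriv (deriv F) θ) hp hc hode
    have hvθ : v θ = deriv F θ / F θ := by rw [hv]
    have hneg : (1 + (2/(4+(v θ)^2) - 1/(a^2+(v θ)^2)) *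
        ((deriv (deriv F) θ * F θ - (deriv F θ)^2)/(F θ)^2)) < 0 := by
      rw [hvθ, hA]
      exact hkey
    refine ⟨by rw [hfin.deriv]; exact hfin, ?_⟩
    rw [hfin.deriv]
    exact hneg
  have hI : Convex ℝ (Set.Ioo (-η/2) (η/2)) := convex_Ioo _ _
  have hcont : ContinuousOn φ (Set.Ioo (-η/2) (η/2)) := fun θ hθ =>
    ((hφderiv θ hθ.1 hθ.2).1.differentiableAt.continuousAt).continuousWithinAt
  have hanti : StrictAntiOn φ (Set.Ioo (-η/2) (η/2)) := by
    apply strictAntiOn_of_deriv_neg hI hcont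
    intro x hx
    rw [interior_Ioo] at hx
    exact (hφderiv x hx.1 hx.2).2
  have hmono_le : ∀ x ∈ Set.Ioo (-η/2) (η/2), ∀ y ∈ Set.Ioo (-η/2) (η/2),
      x ≤ y → φ y ≤ φ x := by
    intro x hx y hy hxy
    rcases eq_or_lt_of_le hxy with h | h
    · rw [h]
    · exact (hanti hx hy h).le
  have hm1 : -η/4 ∈ Set.Ioo (-η/2) (η/2) := ⟨by linarith, by linarith⟩
  have hm2 : η/4 ∈ Set.Ioo (-η/2) (η/2) := ⟨by linarith, by linarith⟩
  set ε₀ := φ (-η/4) - φ (η/4) with hε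
  have hε₀ : 0 < ε₀ := sub_pos.2 (hanti hm1 hm2 (by linarith))
  have hmain : ∀ t : ℝ, 0 < t → t ≤ η/4 →
      η - 2*t < 2*(Real.pi/2 - (1/a)*(Real.pi/2)) - ε₀ := by
    intro t ht0 ht4
    have hθ₁ : -η/2 + t ∈ Set.Ioo (-η/2) (η/2) := ⟨by linarith, by linarith⟩
    have hθ₂ : η/2 - t ∈ Set.Ioo (-η/2) (η/2) := ⟨by linarith, by linarith⟩
    have hle1 : φ (η/2 - t) ≤ φ (η/4) := hmono_le _ hm2 _ hθ₂ (by linarith)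
    have hle2 : φ (-η/4) ≤ φ (-η/2 + t) := hmono_le _ hθ₁ _ hm1 (by linarith)
    have hup := Hfun_upper a ha0 ha2 (v (-η/2 + t))
    have hlo := Hfun_lower a ha0 ha2 (v (η/2 - t))
    have e1 : φ (η/2 - t) = (η/2 - t) + Hfun a (v (η/2 - t)) := by rw [hφ]
    have e2 : φ (-η/2 + t) = (-η/2 + t) + Hfun a (v (-η/2 + t)) := by rw [hφ]
    rw [e1] at hle1
    rw [e2] at hle2
    linarith
  have hfin : η ≤ 2*(Real.pi/2 - (1/a)*(Real.pi/2)) - ε₀ := by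
    by_contra hcon
    push_neg at hcon
    set t := min (η/4) ((η - (2*(Real.pi/2 - (1/a)*(Real.pi/2)) - ε₀))/2) with ht
    have ht0 : 0 < t := lt_min (by linarith) (by linarith)
    have h1 := hmain t ht0 (min_le_left _ _)
    have h2 : t ≤ (η - (2*(Real.pi/2 - (1/a)*(Real.pi/2)) - ε₀))/2 := min_le_right _ _
    linarith
  have hbound : η < Real.pi - (1/a)*Real.pi := by
    have h2H : 2*(Real.pi/2 - (1/a)*(Real.pi/2)) = Real.pi - (1/a)*Real.pi := by ring
    rw [h2H] at hfin
    clear_value a ε₀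
    linarith
  have hsq : Real.sqrt (2*(p-1)/p) = 2 * Real.sqrt ((p-1)/(2*p)) := by
    rw [show (2*(p-1)/p) = (2*Real.sqrt ((p-1)/(2*p)))^2 by
      rw [mul_pow, Real.sq_sqrt (by positivity)]; field_simp]
    exact Real.sqrt_sq (by positivity)
  have hinv : (1:ℝ)/a = Real.sqrt ((p-1)/(2*p)) := by
    rw [ha, one_div, ← Real.sqrt_inv]
    congr 1
    field_simp
  calc η < Real.pi - (1/a)*Real.pi := hbound
    _ = Real.pi * (1 - (1/2) * Real.sqrt (2*(p-1)/p)) := by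
        rw [hsq, hinv]; ring
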